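/- Let U be positive definite and α ∈ ℝ^p with α_i > pa_i + 2 for every i. For every (D, L) ∈ Θ_𝒟, the DAG-Wishart density factorizes as z_𝒟(U, α)^{-1} exp(−(1/2) tr(L D^{-1} Lᵀ U)) ∏_{i=1}^p D_{ii}^{−α_i/2} = ∏_{i=1}^p f_i(D_{ii}) · g_i(L_{<i|}; D_{ii}), where, with ν_i = α_i/2 − pa_i/2 − 1, f_i(λ) = (U_{ii|<i>}/2)^{ν_i} Γ(ν_i)^{-1} λ^{−ν_i − 1} exp(−U_{ii|<i>}/(2λ)) is the inverse-Gamma(ν_i, U_{ii|<i>}/2) density, and g_i(x; λ) = (2πλ)^{−pa_i/2} det(U_{<i>})^{1/2} exp( −(1/(2λ)) (x + (U_{<i>})^{-1} U_{<i|})ᵀ U_{<i>} (x + (U_{<i>})^{-1} U_{<i|}) ) is the N_{pa_i}(−(U_{<i>})^{-1} U_{<i|}, λ (U_{<i>})^{-1}) density, with g_i ≡ 1 when pa(i) = ∅. In particular, under π_{U,α}^{Θ_𝒟} the blocks (D_{ii}, L_{<i|}), i = 1,…,p, are mutually independent, each D_{ii} is inverse-Gamma distributed and each L_{<i|} given D_{ii}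 is Gaussian as specified. -/

import Mathlib

open MeasureTheory Matrix Real Finset

noncomputable section

/-- Index type for the free coordinates of a lower triangular matrix `L ∈ ℒ_𝒟`:
a pair of a vertex `i` and a parent `j ∈ pa i`, standing for the entry `L j i`. -/
abbrev Edges {p : ℕ} (pa : Fin p → Finset (Fin p)) : Type := Σ i : Fin p, {j // j ∈ pa i}

/-- The matrix `L ∈ ℒ_𝒟` built from its free coordinates. -/
def mkL {p : ℕ} (pa : Fin p → Finset (Fin p)) (y : Edges pa → ℝ) :
    Matrix (Fin p) (Fin p) ℝ :=
  Matrix.of fun j i => if j = i then 1 else if h : j ∈ pa i then y ⟨i, j, h⟩ else 0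

/-- `A_{<i>}`, the `pa(i) × pa(i)` submatrix of `A`. -/
def sub2 {p : ℕ} (pa : Fin p → Finset (Fin p)) (A : Matrix (Fin p) (Fin p) ℝ) (i : Fin p) :
    Matrix {j // j ∈ pa i} {j // j ∈ pa i} ℝ :=
  A.submatrix (fun j => j.1) (fun j => j.1)

/-- `A_{<i|}`, the column vector `(A_{ji})_{j ∈ pa(i)}`. -/
def colv {p : ℕ} (pa : Fin p → Finset (Fin p)) (A : Matrix (Fin p) (Fin p) ℝ) (i : Fin p) :
    {j // j ∈ pa i} → ℝ :=
  fun j => A j.1 i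

/-- `A_{[i>}`, the row vector `(A_{ij})_{j ∈ pa(i)}`. -/
def rowv {p : ℕ} (pa : Fin p → Finset (Fin p)) (A : Matrix (Fin p) (Fin p) ℝ) (i : Fin p) :
    {j // j ∈ pa i} → ℝ :=
  fun j => A i j.1

/-- `A_{≤i≥}`, the `fa(i) × fa(i)` submatrix of `A`. -/
def subFam {p : ℕ} (pa : Fin p → Finset (Fin p)) (A : Matrix (Fin p) (Fin p) ℝ) (i : Fin p) :
    Matrix {j // j ∈ insert i (pa i)} {j // j ∈ insert i (pa i)} ℝ :=
  A.submatrix (fun j => j.1) (fun j => j.1)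

/-- `A_{ii|<i>} = A_{ii} - A_{[i>} (A_{<i>})⁻¹ A_{<i|}` (equal to `A_{ii}` when `pa(i) = ∅`). -/
def condVar {p : ℕ} (pa : Fin p → Finset (Fin p)) (A : Matrix (Fin p) (Fin p) ℝ) (i : Fin p) :
    ℝ :=
  A i i - rowv pa A i ⬝ᵥ ((sub2 pa A i)⁻¹ *ᵥ colv pa A i)

/-- The normalizing constant `z_𝒟(U, α)`. -/
def zD {p : ℕ} (pa : Fin p → Finset (Fin p)) (U : Matrix (Fin p) (Fin p) ℝ)
    (α : Fin p → ℝ) : ℝ :=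
  ∏ i : Fin p,
    Real.Gamma (α i / 2 - ((pa i).card : ℝ) / 2 - 1) * (2 : ℝ) ^ (α i / 2 - 1) *
        Real.pi ^ (((pa i).card : ℝ) / 2) *
        (sub2 pa U i).det ^ (α i / 2 - ((pa i).card : ℝ) / 2 - 3 / 2) /
      (subFam pa U i).det ^ (α i / 2 - ((pa i).card : ℝ) / 2 - 1)

/-- The unnormalized DAG-Wishart density on the Cholesky space `Θ_𝒟`. -/
def dagDensity {p : ℕ} (pa : Fin p → Finset (Fin p)) (U : Matrix (Fin p) (Fin p) ℝ)
    (α : Fin p → ℝ) (d : Fin p → ℝ) (L : Matrix (Fin p) (Fin p) ℝ) : ℝ :=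
  Real.exp (-(1 / 2) * ((L * Matrix.diagonal (fun i => (d i)⁻¹) * Lᵀ) * U).trace) *
    ∏ i : Fin p, d i ^ (-(α i) / 2)

/-- The Cholesky space `Θ_𝒟` in free coordinates: diagonal coordinates positive. -/
def thetaSet {p : ℕ} (pa : Fin p → Finset (Fin p)) :
    Set ((Fin p → ℝ) × (Edges pa → ℝ)) :=
  {x | ∀ i, 0 < x.1 i}

/-- The DAG-Wishart distribution `π_{U,α}^{Θ_𝒟}` as a measure on the free coordinates. -/
def dagWishart {p : ℕ} (pa : Fin p → Finset (Fin p)) (U : Matrix (Fin p) (Fin p) ℝ)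
    (α : Fin p → ℝ) : Measure ((Fin p → ℝ) × (Edges pa → ℝ)) :=
  (volume.restrict (thetaSet pa)).withDensity
    (fun x => ENNReal.ofReal ((zD pa U α)⁻¹ * dagDensity pa U α x.1 (mkL pa x.2)))



/-! ### Auxiliary lemmas -/

lemma scalar_step (A P d c S F q Q : ℝ) (hd : 0 < d) (hc : 0 < c) (hS : 0 < S)
    (hF : F = S * c) (hν : 0 < A / 2 - P / 2 - 1) (hq : q = c + Q) :
    (Real.Gamma (A / 2 - P / 2 - 1) * (2 : ℝ) ^ (A / 2 - 1) * Real.pi ^ (P / 2) *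
        S ^ (A / 2 - P / 2 - 3 / 2) / F ^ (A / 2 - P / 2 - 1))⁻¹ *
      (Real.exp (-(1 / 2) * (d⁻¹ * q)) * d ^ (-A / 2)) =
    ((c / 2) ^ (A / 2 - P / 2 - 1) / Real.Gamma (A / 2 - P / 2 - 1) *
        d ^ (-(A / 2 - P / 2 - 1) - 1) * Real.exp (-c / (2 * d))) *
      ((2 * Real.pi * d) ^ (-P / 2) * S ^ ((1 : ℝ) / 2) *
        Real.exp (-(1 / (2 * d)) * Q)) := by
  have hΓ : 0 < Real.Gamma (A / 2 - P / 2 - 1) := Real.Gamma_pos_of_pos hν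
  have hπ : (0:ℝ) < Real.pi := Real.pi_pos
  have hF' : 0 < F := hF ▸ mul_pos hS hc
  have h2 : (0:ℝ) < 2 := two_pos
  subst hq
  rw [Real.rpow_def_of_pos h2, Real.rpow_def_of_pos hπ, Real.rpow_def_of_pos hS,
    Real.rpow_def_of_pos hF', Real.rpow_def_of_pos hd, Real.rpow_def_of_pos (half_pos hc),
    Real.rpow_def_of_pos hd, Real.rpow_def_of_pos (by positivity : (0:ℝ) < 2 * Real.pi * d),
    Real.rpow_def_of_pos hS, ← Real.exp_log hΓ]
  rw [Real.log_div hc.ne' h2.ne', hF, Real.log_mul hS.ne' hc.ne',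
    Real.log_mul (by positivity) hd.ne', Real.log_mul h2.ne' hπ.ne']
  simp only [div_eq_mul_inv]
  simp only [← Real.exp_add, ← Real.exp_neg]
  rw [Real.exp_eq_exp]
  field_simp
  ring

lemma sum_range_eq {n m : Type*} [Fintype n] [Fintype m] [DecidableEq n]
    {f : m → n} (hf : Function.Injective f) (F : n → ℝ)
    (h0 : ∀ k, (∀ j, f j ≠ k) → F k = 0) :
    ∑ k, F k = ∑ j, F (f j) := by
  calc ∑ k, F k = ∑ k ∈ Finset.univ.image f, F k := by
        refine (Finset.sum_subset (Finset.subset_univ _) ?_).symm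
        intro k _ hk
        exact h0 k fun j hj => hk (Finset.mem_image.mpr ⟨j, Finset.mem_univ _, hj⟩)
    _ = ∑ j, F (f j) := Finset.sum_image (fun a _ b _ h => hf h)

lemma posDef_submatrix_inj {n m : Type*} [Fintype n] [Fintype m] [DecidableEq n]
    {M : Matrix n n ℝ} (hM : M.PosDef) {f : m → n} (hf : Function.Injective f) :
    (M.submatrix f f).PosDef := by
  rw [Matrix.posDef_iff_dotProduct_mulVec]
  constructor
  · have := hM.1
    unfold Matrix.IsHermitian at *
    rw [conjTranspose_submatrix, this]
  · intro x hx
    set x' : n → ℝ := Function.extend f x 0 with hx'def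
    have happ : ∀ j, x' (f j) = x j := fun j => hf.extend_apply x 0 j
    have hzero : ∀ k, (∀ j, f j ≠ k) → x' k = 0 := by
      intro k h
      rw [hx'def, Function.extend_apply' _ _ _ (fun ⟨j, hj⟩ => h j hj)]
      rfl
    have hx'ne : x' ≠ 0 := by
      intro h0
      apply hx
      funext j
      have := congrFun h0 (f j)
      rwa [happ] at this
    have key : star x' ⬝ᵥ M *ᵥ x' = star x ⬝ᵥ (M.submatrix f f) *ᵥ x := by
      simp only [dotProduct, mulVec, star_trivial]
      rw [sum_range_eq hf]
      · refine Finset.sum_congr rfl fun j _ => ?_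
        rw [happ]
        congr 1
        rw [sum_range_eq hf]
        · exact Finset.sum_congr rfl fun k _ => by rw [happ]; rfl
        · intro k hk
          rw [hzero k hk, mul_zero]
      · intro k hk
        rw [hzero k hk, zero_mul]
    have := hM.dotProduct_mulVec_pos hx'ne
    rwa [key] at this

lemma det_fam {p : ℕ} (pa : Fin p → Finset (Fin p)) (U : Matrix (Fin p) (Fin p) ℝ)
    (i : Fin p) (hi : i ∉ pa i) (hS : IsUnit (sub2 pa U i).det) :
    (subFam pa U i).det = (sub2 pa U i).det * condVar pa U i := by
  classical
  let e : Unit ⊕ {j // j ∈ pa i} ≃ {j // j ∈ insert i (pa i)} :=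
  { toFun := fun x => match x with
      | Sum.inl _ => ⟨i, Finset.mem_insert_self _ _⟩
      | Sum.inr j => ⟨j.1, Finset.mem_insert_of_mem j.2⟩
    invFun := fun k => if h : k.1 ∈ pa i then Sum.inr ⟨k.1, h⟩ else Sum.inl ()
    left_inv := by
      rintro (⟨⟩ | ⟨j, hj⟩)
      · simp [hi]
      · simp [hj]
    right_inv := by
      rintro ⟨k, hk⟩
      by_cases h : k ∈ pa i
      · simp [h]
      · have : k = i := by
          rcases Finset.mem_insert.mp hk with h' | h'
          · exact h'
          · exact absurd h' h
        subst this
        simp [h] }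
  have hdet : (subFam pa U i).det = ((subFam pa U i).submatrix e e).det :=
    (Matrix.det_submatrix_equiv_self e _).symm
  have hblock : (subFam pa U i).submatrix e e =
      Matrix.fromBlocks (Matrix.of fun _ _ => U i i) (Matrix.of fun _ j => U i j.1)
        (Matrix.of fun j _ => U j.1 i) (sub2 pa U i) := by
    ext x y
    rcases x with (x | x) <;> rcases y with (y | y) <;> rfl
  have : Invertible (sub2 pa U i) := Matrix.invertibleOfIsUnitDet _ hS
  rw [hdet, hblock, Matrix.det_fromBlocks₂₂, invOf_eq_nonsing_inv]
  congr 1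
  rw [Matrix.det_unique]
  simp only [condVar, Matrix.sub_apply, Matrix.mul_apply, dotProduct, mulVec, Matrix.of_apply,
    rowv, colv, Finset.mul_sum, Finset.sum_mul]
  congr 1
  rw [Finset.sum_comm]
  exact Finset.sum_congr rfl fun j _ => Finset.sum_congr rfl fun k _ => by ring

lemma triple_swap {p : ℕ} (f : Fin p → Fin p → Fin p → ℝ) :
    ∑ i, ∑ k, ∑ a, f i k a = ∑ a, ∑ i, ∑ k, f i k a :=
  (Finset.sum_congr rfl fun _ _ => Finset.sum_comm).trans Finset.sum_comm

lemma trace_eq {p : ℕ} (L U : Matrix (Fin p) (Fin p) ℝ) (w : Fin p → ℝ) :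
    ((L * Matrix.diagonal w * Lᵀ) * U).trace
      = ∑ a, w a * ∑ j, ∑ k, L j a * (U j k * L k a) := by
  simp only [Matrix.trace, Matrix.diag_apply, Matrix.mul_apply, Matrix.mul_diagonal,
    Matrix.transpose_apply, Finset.sum_mul, Finset.mul_sum]
  rw [triple_swap]
  refine Finset.sum_congr rfl fun a _ => ?_
  rw [Finset.sum_comm]
  refine Finset.sum_congr rfl fun j _ => Finset.sum_congr rfl fun k _ => ?_
  rw [Finset.sum_eq_single a (fun x _ hx => by rw [Matrix.diagonal_apply_ne w hx]; ring)
    (fun h => absurd (Finset.mem_univ a) h)]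
  rw [Matrix.diagonal_apply_eq]
  ring

lemma col_sum {p : ℕ} (pa : Fin p → Finset (Fin p)) (y : Edges pa → ℝ) (a : Fin p)
    (ha : a ∉ pa a) (f : Fin p → ℝ) :
    ∑ j, mkL pa y j a * f j = f a + ∑ j : {j // j ∈ pa a}, y ⟨a, j⟩ * f j.1 := by
  have key : ∀ j : Fin p, mkL pa y j a * f j =
      (if j = a then f a else 0) + (if h : j ∈ pa a then y ⟨a, j, h⟩ * f j else 0) := by
    intro j
    by_cases h1 : j = a
    · subst h1; simp [mkL, ha]
    · by_cases h2 : j ∈ pa a <;> simp [mkL, h1, h2]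
  rw [Finset.sum_congr rfl fun j _ => key j, Finset.sum_add_distrib]
  congr 1
  · simp
  · calc ∑ j : Fin p, (if h : j ∈ pa a then y ⟨a, j, h⟩ * f j else 0)
        = ∑ j ∈ pa a, (if h : j ∈ pa a then y ⟨a, j, h⟩ * f j else 0) :=
          (Finset.sum_subset (Finset.subset_univ _) (fun x _ hx => dif_neg hx)).symm
      _ = ∑ j ∈ (pa a).attach, (if h : j.1 ∈ pa a then y ⟨a, j.1, h⟩ * f j.1 else 0) :=
          (Finset.sum_attach _ _).symm
      _ = ∑ j : {j // j ∈ pa a}, y ⟨a, j⟩ * f j.1 := by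
          rw [← Finset.univ_eq_attach]
          exact Finset.sum_congr rfl fun j _ => dif_pos j.2

lemma quad_eq {p : ℕ} (pa : Fin p → Finset (Fin p)) (y : Edges pa → ℝ)
    (U : Matrix (Fin p) (Fin p) ℝ) (a : Fin p) (ha : a ∉ pa a)
    (Usym : ∀ j k, U j k = U k j) (hSdet : IsUnit (sub2 pa U a).det) :
    ∑ j, ∑ k, mkL pa y j a * (U j k * mkL pa y k a)
      = condVar pa U a +
        ((colv pa (mkL pa y) a + (sub2 pa U a)⁻¹ *ᵥ colv pa U a) ⬝ᵥ
          (sub2 pa U a *ᵥ (colv pa (mkL pa y) a + (sub2 pa U a)⁻¹ *ᵥ colv pa U a))) := by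
  have hX : ∀ k : {j // j ∈ pa a}, mkL pa y k.1 a = y ⟨a, k⟩ := by
    rintro ⟨kv, hkv⟩
    have hk : kv ≠ a := by rintro rfl; exact ha hkv
    simp [mkL, hk, hkv]
  have hSm : sub2 pa U a *ᵥ ((sub2 pa U a)⁻¹ *ᵥ colv pa U a) = colv pa U a := by
    rw [Matrix.mulVec_mulVec, Matrix.mul_nonsing_inv _ hSdet, Matrix.one_mulVec]
  have hSymS : (sub2 pa U a)ᵀ = sub2 pa U a := by
    ext j k; exact Usym _ _
  have hmSX : ∀ v, ((sub2 pa U a)⁻¹ *ᵥ colv pa U a) ⬝ᵥ (sub2 pa U a *ᵥ v) =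
      colv pa U a ⬝ᵥ v := by
    intro v
    rw [Matrix.dotProduct_mulVec, ← Matrix.mulVec_transpose, hSymS, hSm]
  have hrc : rowv pa U a = colv pa U a := funext fun j => Usym a j.1
  rw [Matrix.mulVec_add, dotProduct_add, add_dotProduct, add_dotProduct, hSm, hmSX,
    dotProduct_comm ((sub2 pa U a)⁻¹ *ᵥ colv pa U a) (colv pa U a)]
  unfold condVar
  rw [hrc]
  have step1 : ∑ j, ∑ k, mkL pa y j a * (U j k * mkL pa y k a)
      = ∑ j, mkL pa y j a * (U j a + ∑ k : {t // t ∈ pa a}, y ⟨a, k⟩ * U j k.1) := by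
    refine Finset.sum_congr rfl fun j _ => ?_
    rw [← Finset.mul_sum]
    congr 1
    have : ∑ i, U j i * mkL pa y i a = ∑ i, mkL pa y i a * U j i :=
      Finset.sum_congr rfl fun k _ => mul_comm _ _
    rw [this, col_sum pa y a ha (fun k => U j k)]
  rw [step1, col_sum pa y a ha (fun j => U j a + ∑ k : {t // t ∈ pa a}, y ⟨a, k⟩ * U j k.1)]
  have hUk : ∀ k : {j // j ∈ pa a}, U a k.1 = U k.1 a := fun k => Usym a k.1
  simp only [dotProduct, mulVec, Pi.add_apply, colv, sub2, Matrix.submatrix_apply, hX, hUk]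
  simp only [Finset.mul_sum, Finset.sum_add_distrib, add_mul, mul_add]
  ring_nf
  have e1 : ∑ x : { j // j ∈ pa a }, U (↑x) a * y ⟨a, x⟩
      = ∑ x : { j // j ∈ pa a }, y ⟨a, x⟩ * U (↑x) a :=
    Finset.sum_congr rfl fun x _ => mul_comm _ _
  have e2 : ∑ x : { j // j ∈ pa a }, ∑ x1 : { j // j ∈ pa a }, y ⟨a, x⟩ * U ↑x ↑x1 * y ⟨a, x1⟩
      = ∑ x : { j // j ∈ pa a }, ∑ x1 : { j // j ∈ pa a }, y ⟨a, x⟩ * y ⟨a, x1⟩ * U ↑x ↑x1 :=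
    Finset.sum_congr rfl fun x _ => Finset.sum_congr rfl fun x1 _ => by ring
  rw [e1, e2]
  ring

/-- pointwise factorization of the normalized DAG-Wishart density into
inverse-Gamma factors for the `D_{ii}` and Gaussian factors for the `L_{<i|}`. -/
theorem stmt4 {p : ℕ} (hp : 1 ≤ p) (pa : Fin p → Finset (Fin p))
    (hpa : ∀ i : Fin p, ∀ j ∈ pa i, i < j)
    (U : Matrix (Fin p) (Fin p) ℝ) (hU : U.PosDef) (α : Fin p → ℝ)
    (hα : ∀ i : Fin p, α i > ((pa i).card : ℝ) + 2)
    (d : Fin p → ℝ) (hd : ∀ i, 0 < d i) (y : Edges pa → ℝ) :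
    (zD pa U α)⁻¹ * dagDensity pa U α d (mkL pa y) =
      ∏ i : Fin p,
        ((condVar pa U i / 2) ^ (α i / 2 - ((pa i).card : ℝ) / 2 - 1) /
            Real.Gamma (α i / 2 - ((pa i).card : ℝ) / 2 - 1) *
          d i ^ (-(α i / 2 - ((pa i).card : ℝ) / 2 - 1) - 1) *
          Real.exp (-condVar pa U i / (2 * d i))) *
        ((2 * Real.pi * d i) ^ (-((pa i).card : ℝ) / 2) * (sub2 pa U i).det ^ ((1 : ℝ) / 2) *
          Real.exp (-(1 / (2 * d i)) *
            ((colv pa (mkL pa y) i + (sub2 pa U i)⁻¹ *ᵥ colv pa U i) ⬝ᵥ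
              (sub2 pa U i *ᵥ
                (colv pa (mkL pa y) i + (sub2 pa U i)⁻¹ *ᵥ colv pa U i))))) := by
  have Usym : ∀ j k, U j k = U k j := by
    intro j k
    have h := congrFun (congrFun hU.1 k) j
    simpa [Matrix.conjTranspose_apply] using h
  have hnotmem : ∀ i : Fin p, i ∉ pa i := fun i h => lt_irrefl i (hpa i i h)
  have hSpos : ∀ i, (0:ℝ) < (sub2 pa U i).det := fun i =>
    (posDef_submatrix_inj hU (Subtype.val_injective)).det_pos
  have hFpos : ∀ i, (0:ℝ) < (subFam pa U i).det := fun i =>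
    (posDef_submatrix_inj hU (Subtype.val_injective)).det_pos
  have hFdet : ∀ i, (subFam pa U i).det = (sub2 pa U i).det * condVar pa U i := fun i =>
    det_fam pa U i (hnotmem i) (isUnit_iff_ne_zero.mpr (hSpos i).ne')
  have hcpos : ∀ i, 0 < condVar pa U i := by
    intro i
    have h1 := hFpos i
    rw [hFdet i] at h1
    nlinarith [hSpos i]
  unfold dagDensity zD
  rw [trace_eq, ← Finset.prod_inv_distrib, Finset.mul_sum]
  rw [Real.exp_sum, ← Finset.prod_mul_distrib, ← Finset.prod_mul_distrib]
  refine Finset.prod_congr rfl fun i _ => ?_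
  have hν : 0 < α i / 2 - ((pa i).card : ℝ) / 2 - 1 := by
    have := hα i; linarith
  have hq := quad_eq pa y U i (hnotmem i) Usym (isUnit_iff_ne_zero.mpr (hSpos i).ne')
  exact scalar_step (α i) ((pa i).card : ℝ) (d i) (condVar pa U i) ((sub2 pa U i).det)
    ((subFam pa U i).det) _ _ (hd i) (hcpos i) (hSpos i) (hFdet i) hν hq


end
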